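/- Let i : C → D be a fully faithful embedding, u an object of D, and for every object c of C let a morphism f_c : i(c) → u be chosen, with each f_c a monomorphism in D. If u is C-ultrahomogeneous and satisfies the Galois property with respect to C̃, then the functor F : S(Aut(u)) → C^op, defined on objects by sending (the object corresponding to) f : i(a) → u to a, and sending a morphism from f to g represented by a coset χ(g)·α (where χ(f) ⊆ α⁻¹·χ(g)·α) to the unique morphism z : dom(g) → dom(f) in C with f ∘ i(z) = α⁻¹ ∘ g, is well defined and is an equivalence of categories; in particular S(Aut(u)) is equivalent to C^op. -/

import Mathlib

open CategoryTheory Opposite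

universe v₁ u₁ v₂ u₂

namespace Fraisse

variable {C : Type u₁} [Category.{v₁} C] {D : Type u₂} [Category.{v₂} D]

/-- The amalgamation property. -/
def AP (C : Type u₁) [Category.{v₁} C] : Prop :=
  ∀ ⦃a b c : C⦄ (f : a ⟶ b) (g : a ⟶ c),
    ∃ (d : C) (f' : b ⟶ d) (g' : c ⟶ d), f ≫ f' = g ≫ g'

/-- `u` is `C`-ultrahomogeneous with respect to the embedding `i : C ⥤ D`. -/
def IsUltrahomog (i : C ⥤ D) (u : D) : Prop :=
  ∀ ⦃a b : C⦄ (j : a ⟶ b) (χ₁ : i.obj a ⟶ u) (χ₂ : i.obj b ⟶ u),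
    ∃ k : u ≅ u, χ₁ ≫ k.hom = i.map j ≫ χ₂

variable (i : C ⥤ D) (u : D) (f : ∀ c : C, i.obj c ⟶ u)

/-- An object of the category `C̃`: an object `a` of `C` together with a morphism
`i(a) ⟶ u` of the form `α ∘ f_a` for some automorphism `α` of `u`. -/
structure TildeObj where
  left : C
  hom : i.obj left ⟶ u
  compat : ∃ α : Aut u, hom = f left ≫ α.hom

/-- The category `C̃`, a full subcategory of the comma category `(i ↓ u)`. -/
instance tildeCategory : Category (TildeObj i u f) where
  Hom x y := { m : x.left ⟶ y.left // i.map m ≫ y.hom = x.hom }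
  id x := ⟨𝟙 x.left, by simp⟩
  comp m n := ⟨m.1 ≫ n.1, by rw [Functor.map_comp, Category.assoc, n.2, m.2]⟩
  id_comp m := Subtype.ext (Category.id_comp m.1)
  comp_id m := Subtype.ext (Category.comp_id m.1)
  assoc m n p := Subtype.ext (Category.assoc m.1 n.1 p.1)

variable {i u f} in
/-- The stabilizer subgroup `Aut_g(u) ≤ Aut(u)` of an object `g` of `C̃`. -/
def stab (x : TildeObj i u f) : Subgroup (Aut u) where
  carrier := { α : Aut u | x.hom ≫ α.hom = x.hom }
  one_mem' := by
    show x.hom ≫ (Iso.refl u).hom = x.hom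
    simp
  mul_mem' := by
    intro a b ha hb
    show x.hom ≫ (a * b).hom = x.hom
    show x.hom ≫ (b.hom ≫ a.hom) = x.hom
    rw [← Category.assoc]
    rw [show x.hom ≫ b.hom = x.hom from hb, show x.hom ≫ a.hom = x.hom from ha]
  inv_mem' := by
    intro a ha
    show x.hom ≫ (a⁻¹).hom = x.hom
    show x.hom ≫ a.inv = x.hom
    conv_lhs => rw [← show x.hom ≫ a.hom = x.hom from ha]
    rw [Category.assoc]
    exact (congrArg (x.hom ≫ ·) (Iso.hom_inv_id (a : u ≅ u))).trans (Category.comp_id _)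

/-- The functor `χ : C̃^op ⥤ Subgr(Aut(u))` sending an object of `C̃` to its stabilizer. -/
def chi : (TildeObj i u f)ᵒᵖ ⥤ Subgroup (Aut u) where
  obj x := stab x.unop
  map {X Y} m := homOfLE (by
    intro α hα
    show Y.unop.hom ≫ α.hom = Y.unop.hom
    rw [← m.unop.2, Category.assoc,
      show X.unop.hom ≫ α.hom = X.unop.hom from hα])

/-- The Galois property: `χ` is full and faithful and reflects identities (in particular
it is injective on objects). -/
def GaloisProp : Prop :=
  (chi i u f).Full ∧ (chi i u f).Faithful ∧ Function.Injective (chi i u f).obj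

variable {i u f} in
/-- The condition for `α` to represent a morphism `f → g` of `S(Aut(u))`:
`χ(f) ⊆ α⁻¹·χ(g)·α`. -/
def SCond (x y : TildeObj i u f) (α : Aut u) : Prop :=
  ∀ β ∈ stab x, α * β * α⁻¹ ∈ stab y

variable {i u f} in
/-- Representatives of morphisms `x ⟶ y` of `S(Aut(u))` are identified when they define
the same right coset of `χ(y)`. -/
def sSetoid (x y : TildeObj i u f) : Setoid { α : Aut u // SCond x y α } where
  r a b := a.1 * b.1⁻¹ ∈ stab y
  iseqv := by
    constructor
    · intro a; rw [mul_inv_cancel]; exact one_mem _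
    · intro a b h
      have := inv_mem h
      rwa [mul_inv_rev, inv_inv] at this
    · intro a b c hab hbc
      have := mul_mem hab hbc
      rwa [mul_assoc, ← mul_assoc b.1⁻¹, inv_mul_cancel, one_mul] at this

/-- Objects of the category `S(Aut(u))`. -/
structure SObj where
  /-- The underlying object of `C̃`, thought of as the coset space `Aut(u)/χ(f)`. -/
  obj : TildeObj i u f

variable {i u f} in
/-- Morphisms of `S(Aut(u))`: right cosets `χ(y)·α` with `χ(x) ⊆ α⁻¹·χ(y)·α`. -/
def SHom (x y : SObj i u f) : Type v₂ :=
  Quotient (sSetoid x.obj y.obj)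

variable {i u f} in
/-- The morphism of `S(Aut(u))` determined by a representative `α`. -/
def mkSHom (x y : SObj i u f) (α : Aut u) (hα : SCond x.obj y.obj α) : SHom x y :=
  Quotient.mk _ ⟨α, hα⟩

/-- The category `S(Aut(u))` of the right coset spaces `Aut(u)/χ(f)`, with composition
induced by multiplication in `Aut(u)`. -/
instance sCategory : Category (SObj i u f) where
  Hom x y := SHom x y
  id x := mkSHom x x 1 (fun β hβ => by rwa [one_mul, inv_one, mul_one])
  comp {x y z} m n :=
    Quotient.lift₂
      (fun (a : { α : Aut u // SCond x.obj y.obj α })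
           (b : { α : Aut u // SCond y.obj z.obj α }) =>
        mkSHom x z (b.1 * a.1) (by
          intro γ hγ
          have h1 : b.1 * a.1 * γ * (b.1 * a.1)⁻¹ = b.1 * (a.1 * γ * a.1⁻¹) * b.1⁻¹ := by
            group
          rw [h1]
          exact b.2 _ (a.2 γ hγ)))
      (by
        intro a b a' b' ha hb
        apply Quotient.sound
        have h1 : b.1 * a.1 * (b'.1 * a'.1)⁻¹ =
            b.1 * (a.1 * a'.1⁻¹) * b.1⁻¹ * (b.1 * b'.1⁻¹) := by group
        show b.1 * a.1 * (b'.1 * a'.1)⁻¹ ∈ stab z.obj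
        rw [h1]
        exact mul_mem (b.2 _ ha) hb)
      m n
  id_comp {x y} m := by
    refine Quotient.inductionOn m (fun a => Quotient.sound ?_)
    show a.1 * 1 * a.1⁻¹ ∈ stab y.obj
    rw [mul_one, mul_inv_cancel]
    exact one_mem _
  comp_id {x y} m := by
    refine Quotient.inductionOn m (fun a => Quotient.sound ?_)
    show 1 * a.1 * a.1⁻¹ ∈ stab y.obj
    rw [one_mul, mul_inv_cancel]
    exact one_mem _
  assoc {x y z w} m n p := by
    refine Quotient.inductionOn₃ m n p (fun a b c => Quotient.sound ?_)
    show c.1 * (b.1 * a.1) * (c.1 * b.1 * a.1)⁻¹ ∈ stab w.obj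
    have h1 : c.1 * (b.1 * a.1) * (c.1 * b.1 * a.1)⁻¹ = 1 := by group
    rw [h1]
    exact one_mem _

section Aux

variable {i u f}

@[simp] lemma aut_mul_hom (a b : Aut u) : (a * b).hom = b.hom ≫ a.hom := rfl
@[simp] lemma aut_mul_inv (a b : Aut u) : (a * b).inv = a.inv ≫ b.inv := rfl
@[simp] lemma aut_inv_hom (a : Aut u) : (a⁻¹).hom = a.inv := rfl
@[simp] lemma aut_inv_inv (a : Aut u) : (a⁻¹).inv = a.hom := rfl
@[simp] lemma aut_hom_inv_id (a : Aut u) : a.hom ≫ a.inv = 𝟙 u := Iso.hom_inv_id (a : u ≅ u)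
@[simp] lemma aut_inv_hom_id (a : Aut u) : a.inv ≫ a.hom = 𝟙 u := Iso.inv_hom_id (a : u ≅ u)
@[simp] lemma aut_hom_inv_id_assoc (a : Aut u) {Z : D} (g : u ⟶ Z) : a.hom ≫ a.inv ≫ g = g :=
  Iso.hom_inv_id_assoc (a : u ≅ u) g
@[simp] lemma aut_inv_hom_id_assoc (a : Aut u) {Z : D} (g : u ⟶ Z) : a.inv ≫ a.hom ≫ g = g :=
  Iso.inv_hom_id_assoc (a : u ≅ u) g

lemma tilde_hom_mono (hmono : ∀ c : C, Mono (f c)) (x : TildeObj i u f) : Mono x.hom := by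
  obtain ⟨α, hα⟩ := x.compat
  rw [hα]
  haveI := hmono x.left
  haveI : Mono α.hom := ⟨fun g h e => by simpa using congrArg (· ≫ α.inv) e⟩
  exact mono_comp _ _

/-- Shift an object of `C̃` by an automorphism of `u`. -/
def shiftObj (y : TildeObj i u f) (α : Aut u) : TildeObj i u f where
  left := y.left
  hom := y.hom ≫ α.inv
  compat := by
    obtain ⟨β, hβ⟩ := y.compat
    refine ⟨α⁻¹ * β, ?_⟩
    rw [hβ, aut_mul_hom, aut_inv_hom, Category.assoc]

lemma exists_unique_z (hfaith : i.Faithful) (hmono : ∀ c : C, Mono (f c))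
    (hGal : GaloisProp i u f) (x y : TildeObj i u f) (α : Aut u) (hα : SCond x y α) :
    ∃! z : y.left ⟶ x.left, i.map z ≫ x.hom = y.hom ≫ α.inv := by
  obtain ⟨hfull, _, _⟩ := hGal
  have hle : stab x ≤ stab (shiftObj y α) := by
    intro γ hγ
    have h2 : y.hom ≫ (α * γ * α⁻¹).hom = y.hom := hα γ hγ
    have h3 : y.hom ≫ α.inv ≫ γ.hom ≫ α.hom = y.hom := by
      simpa [aut_mul_hom, aut_inv_hom] using h2
    show (y.hom ≫ α.inv) ≫ γ.hom = y.hom ≫ α.inv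
    have h4 := congrArg (· ≫ α.inv) h3
    simpa using h4
  haveI := hfull
  obtain ⟨m, -⟩ := (chi i u f).map_surjective
    (homOfLE hle : (chi i u f).obj (op x) ⟶ (chi i u f).obj (op (shiftObj y α)))
  refine ⟨m.unop.1, m.unop.2, ?_⟩
  intro z hz
  haveI := tilde_hom_mono hmono x
  have : i.map z = i.map m.unop.1 := by
    apply (cancel_mono x.hom).1
    rw [hz]
    exact m.unop.2.symm
  exact hfaith.map_injective this

/-- The chosen morphism of `C` underlying a morphism of `S(Aut(u))`. -/
noncomputable def theZ (hfaith : i.Faithful) (hmono : ∀ c : C, Mono (f c))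
    (hGal : GaloisProp i u f) {x y : SObj i u f} (m : x ⟶ y) : y.obj.left ⟶ x.obj.left :=
  Quotient.lift
    (fun a : { α : Aut u // SCond x.obj y.obj α } =>
      (exists_unique_z hfaith hmono hGal x.obj y.obj a.1 a.2).choose)
    (by
      intro a b hab
      dsimp
      have spb := (exists_unique_z hfaith hmono hGal x.obj y.obj b.1 b.2).choose_spec.1
      -- hab : a.1 * b.1⁻¹ ∈ stab y.obj
      have h1 : y.obj.hom ≫ b.1.inv ≫ a.1.hom = y.obj.hom := by
        simpa [aut_mul_hom, aut_inv_hom] using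
          (show y.obj.hom ≫ (a.1 * b.1⁻¹).hom = y.obj.hom from hab)
      have h2 : y.obj.hom ≫ b.1.inv = y.obj.hom ≫ a.1.inv := by
        have := congrArg (· ≫ a.1.inv) h1
        simpa using this
      refine ((exists_unique_z hfaith hmono hGal x.obj y.obj a.1 a.2).choose_spec.2 _ ?_).symm
      show i.map _ ≫ x.obj.hom = y.obj.hom ≫ a.1.inv
      have spb' : i.map (exists_unique_z hfaith hmono hGal x.obj y.obj b.1 b.2).choose ≫
          x.obj.hom = y.obj.hom ≫ b.1.inv := spb
      rw [spb', h2])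
    m

lemma theZ_spec (hfaith : i.Faithful) (hmono : ∀ c : C, Mono (f c))
    (hGal : GaloisProp i u f) {x y : SObj i u f} (α : Aut u) (hα : SCond x.obj y.obj α) :
    i.map (theZ hfaith hmono hGal (mkSHom x y α hα)) ≫ x.obj.hom = y.obj.hom ≫ α.inv :=
  (exists_unique_z hfaith hmono hGal x.obj y.obj α hα).choose_spec.1

lemma theZ_unique (hfaith : i.Faithful) (hmono : ∀ c : C, Mono (f c))
    (hGal : GaloisProp i u f) {x y : SObj i u f} (α : Aut u) (hα : SCond x.obj y.obj α)
    (z : y.obj.left ⟶ x.obj.left) (hz : i.map z ≫ x.obj.hom = y.obj.hom ≫ α.inv) :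
    theZ hfaith hmono hGal (mkSHom x y α hα) = z :=
  ((exists_unique_z hfaith hmono hGal x.obj y.obj α hα).choose_spec.2 z hz).symm

/-- The functor `F : S(Aut(u)) ⥤ Cᵒᵖ`. -/
noncomputable def theF (hfaith : i.Faithful) (hmono : ∀ c : C, Mono (f c))
    (hGal : GaloisProp i u f) : SObj i u f ⥤ Cᵒᵖ where
  obj x := op x.obj.left
  map m := (theZ hfaith hmono hGal m).op
  map_id x := by
    have h : theZ hfaith hmono hGal (𝟙 x) = 𝟙 x.obj.left := by
      refine theZ_unique hfaith hmono hGal 1 _ (𝟙 x.obj.left) ?_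
      simp [show (1 : Aut u).inv = 𝟙 u from rfl]
    show (theZ hfaith hmono hGal (𝟙 x)).op = 𝟙 (op x.obj.left)
    rw [h]
    rfl
  map_comp {x y z} m n := by
    refine Quotient.inductionOn₂ m n (fun a b => ?_)
    have spa := theZ_spec hfaith hmono hGal (x := x) (y := y) a.1 a.2
    have spb := theZ_spec hfaith hmono hGal (x := y) (y := z) b.1 b.2
    have key : theZ hfaith hmono hGal
        ((Quotient.mk _ a : x ⟶ y) ≫ (Quotient.mk _ b : y ⟶ z)) =
        theZ hfaith hmono hGal (mkSHom y z b.1 b.2) ≫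
          theZ hfaith hmono hGal (mkSHom x y a.1 a.2) := by
      refine theZ_unique hfaith hmono hGal (b.1 * a.1) _ _ ?_
      rw [Functor.map_comp, Category.assoc, spa, ← Category.assoc, spb,
        aut_mul_inv, Category.assoc]
    show (theZ hfaith hmono hGal _).op = _
    rw [key]
    rfl
  
end Aux

/-- Let `i : C ⥤ D` be a fully faithful embedding, `u` an object of `D`,
and for every object `c` of `C` let a monomorphism `f_c : i(c) ⟶ u` be chosen.  If `u` is
`C`-ultrahomogeneous and satisfies the Galois property with respect to `C̃`, then the
functor `F : S(Aut(u)) ⥤ Cᵒᵖ` — sending (the object corresponding to) `g : i(a) ⟶ u` to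
`a` and the morphism `x ⟶ y` represented by the coset `χ(y)·α` to the unique morphism
`z : dom(y) ⟶ dom(x)` of `C` with `x.hom ∘ i(z) = α⁻¹ ∘ y.hom` — is well defined and is
an equivalence of categories; in particular `S(Aut(u))` is equivalent to `Cᵒᵖ`. -/
theorem statement_19 (hfull : i.Full) (hfaith : i.Faithful)
    (hmono : ∀ c : C, Mono (f c)) (hultra : IsUltrahomog i u)
    (hGal : GaloisProp i u f) :
    ∃ F : SObj i u f ⥤ Cᵒᵖ,
      F.IsEquivalence ∧
      ∃ hobj : ∀ x : SObj i u f, F.obj x = op x.obj.left,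
        ∀ (x y : SObj i u f) (α : Aut u) (hα : SCond x.obj y.obj α),
          i.map ((eqToHom (hobj x).symm ≫ F.map (mkSHom x y α hα) ≫
              eqToHom (hobj y)).unop) ≫ x.obj.hom =
            y.obj.hom ≫ α.inv := by
  refine ⟨theF hfaith hmono hGal, ?_, fun x => rfl, ?_⟩
  · have hFull : (theF hfaith hmono hGal).Full := by
      constructor
      intro x y g
      change op x.obj.left ⟶ op y.obj.left at g
      obtain ⟨k, hk⟩ := hultra g.unop y.obj.hom x.obj.hom
      let α : Aut u := k.symm
      have hα : SCond x.obj y.obj α := by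
        intro β hβ
        have hβ' : x.obj.hom ≫ β.hom = x.obj.hom := hβ
        show y.obj.hom ≫ (α * β * α⁻¹).hom = y.obj.hom
        have key : y.obj.hom ≫ k.hom ≫ β.hom ≫ k.inv = y.obj.hom := by
          calc y.obj.hom ≫ k.hom ≫ β.hom ≫ k.inv
              = (y.obj.hom ≫ k.hom) ≫ β.hom ≫ k.inv := by simp
            _ = (i.map g.unop ≫ x.obj.hom) ≫ β.hom ≫ k.inv := by rw [hk]
            _ = i.map g.unop ≫ (x.obj.hom ≫ β.hom) ≫ k.inv := by simp
            _ = i.map g.unop ≫ x.obj.hom ≫ k.inv := by rw [hβ']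
            _ = ((y.obj.hom ≫ k.hom) ≫ k.inv) := by rw [hk]; simp
            _ = y.obj.hom := by simp
        exact key
      refine ⟨mkSHom x y α hα, ?_⟩
      have hz : theZ hfaith hmono hGal (mkSHom x y α hα) = g.unop := by
        refine theZ_unique hfaith hmono hGal α hα g.unop ?_
        exact hk.symm
      show (theZ hfaith hmono hGal (mkSHom x y α hα)).op = g
      rw [hz]
      rfl
    have hFaith : (theF hfaith hmono hGal).Faithful := by
      constructor
      intro x y m n h
      refine Quotient.inductionOn₂ m n (fun a b h => ?_) h
      have hz : theZ hfaith hmono hGal (mkSHom x y a.1 a.2) =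
          theZ hfaith hmono hGal (mkSHom x y b.1 b.2) := Quiver.Hom.op_inj h
      have spa := theZ_spec hfaith hmono hGal (x := x) (y := y) a.1 a.2
      have spb := theZ_spec hfaith hmono hGal (x := x) (y := y) b.1 b.2
      apply Quotient.sound
      show a.1 * b.1⁻¹ ∈ stab y.obj
      show y.obj.hom ≫ (a.1 * b.1⁻¹).hom = y.obj.hom
      have h2 : y.obj.hom ≫ a.1.inv = y.obj.hom ≫ b.1.inv := by
        rw [← spa, ← spb, hz]
      have : y.obj.hom ≫ b.1.inv ≫ a.1.hom = y.obj.hom := by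
        rw [← Category.assoc, ← h2, Category.assoc, aut_inv_hom_id, Category.comp_id]
      simpa [aut_mul_hom, aut_inv_hom] using this
    have hES : (theF hfaith hmono hGal).EssSurj := by
      constructor
      intro a
      exact ⟨⟨⟨a.unop, f a.unop, ⟨1, (Category.comp_id _).symm⟩⟩⟩, ⟨Iso.refl _⟩⟩
    exact ⟨hFaith, hFull, hES⟩
  · intro x y α hα
    have := theZ_spec hfaith hmono hGal (x := x) (y := y) α hα
    show i.map ((eqToHom rfl ≫ (theZ hfaith hmono hGal (mkSHom x y α hα)).op ≫
      eqToHom rfl).unop) ≫ x.obj.hom = _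
    simpa using this

end Fraisse
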